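/- Let k be an even positive integer, ε > 0, and m a positive integer. Let S be the k×k matrix pencil whose (i,j) entry is λ if i + j = k, 1 if i + j = k + 1, (ε/m)·λ if (i,j) = (k,k), and 0 otherwise. Then det S(λ) = (-1)^{k/2} · (1 - (ε/m)·λ^k). -/

import Mathlib

open Polynomial Equiv

private def revSwaps (n : ℕ) (i : ℕ) : Equiv.Perm (Fin n) :=
  if h : 2 * i + 1 < n then Equiv.swap ⟨i, by omega⟩ ⟨n - 1 - i, by omega⟩ else 1

private lemma revSwaps_prod_apply (n : ℕ) :
    ∀ j, 2 * j ≤ n → ∀ x : Fin n,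
    (((List.range j).map (revSwaps n)).prod x : Fin n)
      = if x.1 < j ∨ n - j ≤ x.1 then ⟨n - 1 - x.1, by omega⟩ else x := by
  intro j
  induction j with
  | zero =>
    intro hj x
    rw [if_neg (by omega)]
    simp
  | succ j ih =>
    intro hj x
    rw [List.range_succ, List.map_append, List.prod_append, List.map_singleton,
      List.prod_singleton, Equiv.Perm.mul_apply]
    have hlt : 2 * j + 1 < n := by omega
    have hswap : revSwaps n j = Equiv.swap ⟨j, by omega⟩ ⟨n - 1 - j, by omega⟩ := dif_pos hlt
    rw [hswap, Equiv.swap_apply_def]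
    by_cases h1 : x = (⟨j, by omega⟩ : Fin n)
    · rw [if_pos h1, ih (by omega), if_neg (by simp only [Fin.val_mk]; omega)]
      rw [Fin.ext_iff] at h1
      simp only [Fin.val_mk] at h1
      rw [if_pos (by omega)]
      exact Fin.ext (by simp only [Fin.val_mk]; omega)
    · rw [if_neg h1]
      by_cases h2 : x = (⟨n - 1 - j, by omega⟩ : Fin n)
      · rw [if_pos h2, ih (by omega), if_neg (by simp only [Fin.val_mk]; omega)]
        rw [Fin.ext_iff] at h2
        simp only [Fin.val_mk] at h2
        rw [if_pos (by omega)]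
        exact Fin.ext (by simp only [Fin.val_mk]; omega)
      · rw [if_neg h2, ih (by omega)]
        rw [Fin.ext_iff] at h1 h2
        simp only [Fin.val_mk] at h1 h2
        by_cases h3 : x.1 < j + 1 ∨ n - (j + 1) ≤ x.1
        · rw [if_pos h3, if_pos (by omega)]
        · rw [if_neg h3, if_neg (by omega)]

private lemma sign_revPerm_of_even (n : ℕ) (hn : Even n) :
    Equiv.Perm.sign (Fin.revPerm : Equiv.Perm (Fin n)) = (-1) ^ (n / 2) := by
  have h2 : 2 * (n / 2) = n := by
    rw [Nat.even_iff] at hn; omega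
  have hrev : (Fin.revPerm : Equiv.Perm (Fin n))
      = ((List.range (n / 2)).map (revSwaps n)).prod := by
    apply Equiv.ext
    intro x
    rw [revSwaps_prod_apply n (n / 2) (by omega) x, if_pos (by omega)]
    exact Fin.ext (by simp only [Fin.revPerm_apply, Fin.val_rev, Fin.val_mk]; omega)
  rw [hrev, Equiv.Perm.sign_prod_list_swap, List.length_map, List.length_range]
  intro g hg
  simp only [List.mem_map, List.mem_range] at hg
  obtain ⟨i, hi, rfl⟩ := hg
  have hlt : 2 * i + 1 < n := by omega
  rw [revSwaps, dif_pos hlt]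
  exact ⟨_, _, by rw [Fin.ne_iff_vne]; simp only [Fin.val_mk]; omega, rfl⟩

/-- For k even, the determinant of the perturbed Hermitian Jordan-like pencil
S_{(∞,k)}^{(ε,m)} associated with the infinite eigenvalue equals
(-1)^{k/2}·(1 - (ε/m)·λ^k). -/
theorem stmt_4 (k : ℕ) (hk : 0 < k) (hke : Even k) (ε : ℝ) (hε : 0 < ε)
    (m : ℕ) (hm : 0 < m)
    (S : Matrix (Fin k) (Fin k) (Polynomial ℂ))
    (hS : S = fun i j =>
      if (i.1 + 1) + (j.1 + 1) = k then X
      else if (i.1 + 1) + (j.1 + 1) = k + 1 then 1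
      else if i.1 + 1 = k ∧ j.1 + 1 = k then C (((ε / m : ℝ)) : ℂ) * X
      else 0) :
    S.det = (-1) ^ (k / 2) * (1 - C (((ε / m : ℝ)) : ℂ) * X ^ k) := by
  obtain ⟨n, rfl⟩ : ∃ n, k = n + 1 := ⟨k - 1, by omega⟩
  have hk2 : (n + 1) % 2 = 0 := Nat.even_iff.mp hke
  have hn1 : 1 ≤ n := by omega
  set e : Polynomial ℂ := C ((ε / m : ℝ) : ℂ) with he
  have hSab : ∀ a b : Fin (n + 1), S a b =
      if (a.1 + 1) + (b.1 + 1) = n + 1 then X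
      else if (a.1 + 1) + (b.1 + 1) = n + 1 + 1 then 1
      else if a.1 + 1 = n + 1 ∧ b.1 + 1 = n + 1 then e * X
      else 0 := fun a b => by simp only [hS]
  have he0 : e ≠ 0 := by
    rw [he, Ne, C_eq_zero, Complex.ofReal_eq_zero]
    have h1 : (0 : ℝ) < ε / m := div_pos hε (by exact_mod_cast hm)
    exact ne_of_gt h1
  set ρ := (Fin.revPerm : Equiv.Perm (Fin (n + 1))) with hρdef
  set τ := ρ * finRotate (n + 1) with hτdef
  have hρv : ∀ i : Fin (n + 1), (ρ i).1 = n - i.1 := fun i => by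
    simp only [hρdef, Fin.revPerm_apply, Fin.val_rev]; omega
  have hτlast : τ (Fin.last n) = Fin.last n := by
    apply Fin.ext
    simp only [hτdef, Equiv.Perm.mul_apply, finRotate_succ_apply]
    rw [hρv, Fin.val_add_one, if_pos rfl, Fin.val_last]
    omega
  have hτv : ∀ i : Fin (n + 1), i ≠ Fin.last n → (τ i).1 = n - 1 - i.1 := by
    intro i hi
    simp only [hτdef, Equiv.Perm.mul_apply, finRotate_succ_apply]
    rw [hρv, Fin.val_add_one, if_neg hi]
    omega
  have hval_ne : ∀ i : Fin (n + 1), i ≠ Fin.last n → i.1 ≠ n := by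
    intro i hi h
    exact hi (Fin.ext (by rw [h, Fin.val_last]))
  -- product over the reversal permutation
  have hprod_ρ : ∏ i : Fin (n + 1), S (ρ i) i = 1 := by
    apply Finset.prod_eq_one
    intro i _
    have h1 := hρv i
    have h2 := i.isLt
    rw [hSab, if_neg (by omega), if_pos (by omega)]
  have hcard : (Finset.univ.erase (Fin.last n)).card = n := by
    rw [Finset.card_erase_of_mem (Finset.mem_univ _), Finset.card_univ, Fintype.card_fin]
    omega
  have hprod_τ : ∏ i : Fin (n + 1), S (τ i) i = e * X ^ (n + 1) := by
    rw [← Finset.mul_prod_erase Finset.univ _ (Finset.mem_univ (Fin.last n))]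
    have h1 : S (τ (Fin.last n)) (Fin.last n) = e * X := by
      rw [hτlast, hSab, if_neg (by rw [Fin.val_last]; omega),
        if_neg (by rw [Fin.val_last]; omega), if_pos (by rw [Fin.val_last]; omega)]
    have h2 : ∀ i ∈ Finset.univ.erase (Fin.last n), S (τ i) i = X := by
      intro i hi
      have hine : i ≠ Fin.last n := Finset.ne_of_mem_erase hi
      have hiv := hval_ne i hine
      have ht := hτv i hine
      have hilt := i.isLt
      rw [hSab, if_pos (by omega)]
    rw [h1, Finset.prod_congr rfl h2, Finset.prod_const, hcard]
    ring
  -- all other permutations contribute zero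
  have hkey : ∀ σ : Equiv.Perm (Fin (n + 1)), σ ≠ ρ → σ ≠ τ →
      ∏ i : Fin (n + 1), S (σ i) i = 0 := by
    intro σ hσρ hστ
    by_contra h0
    have hne : ∀ i, S (σ i) i ≠ 0 := fun i hi =>
      h0 (Finset.prod_eq_zero (Finset.mem_univ i) hi)
    have hc : ∀ i : Fin (n + 1), (σ i).1 + i.1 + 2 = n + 1 ∨ (σ i).1 + i.1 + 2 = n + 2 ∨
        ((σ i).1 = n ∧ i.1 = n) := by
      intro i
      by_contra hq
      push_neg at hq
      apply hne i
      rw [hSab, if_neg (by omega), if_neg (by omega),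
        if_neg (by rintro ⟨u1, u2⟩; exact hq.2.2 (by omega) (by omega))]
    have hsum : ∀ π : Equiv.Perm (Fin (n + 1)),
        ∑ i : Fin (n + 1), (π i).1 = ∑ i : Fin (n + 1), i.1 := fun π =>
      Equiv.sum_comp π Fin.val
    rcases hc (Fin.last n) with h | h | h
    · rw [Fin.val_last] at h; omega
    · -- σ (last) = 0, so σ = ρ
      apply hσρ
      rw [Fin.val_last] at h
      have hle : ∀ i ∈ Finset.univ, (σ i).1 ≤ (ρ i).1 := by
        intro i _
        have h1 := hρv i
        by_cases hi : i = Fin.last n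
        · subst hi; omega
        · have hiv := hval_ne i hi
          rcases hc i with h' | h' | h'
          · omega
          · omega
          · exact absurd h'.2 hiv
      have heq := (Finset.sum_eq_sum_iff_of_le hle).mp (by rw [hsum σ, hsum ρ])
      exact Equiv.ext fun i => Fin.ext (heq i (Finset.mem_univ i))
    · -- σ (last) = last, so σ = τ
      apply hστ
      have hle : ∀ i ∈ Finset.univ, (τ i).1 ≤ (σ i).1 := by
        intro i _
        by_cases hi : i = Fin.last n
        · subst hi; rw [hτlast, Fin.val_last]; omega
        · have hiv := hval_ne i hi
          have ht := hτv i hi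
          rcases hc i with h' | h' | h'
          · omega
          · omega
          · exact absurd h'.2 hiv
      have heq := (Finset.sum_eq_sum_iff_of_le hle).mp (by rw [hsum σ, hsum τ])
      exact Equiv.ext fun i => Fin.ext (heq i (Finset.mem_univ i)).symm
  have hρτ : ρ ≠ τ := by
    intro hEq
    have h2 := hτlast
    rw [← hEq] at h2
    have h3 := congrArg Fin.val h2
    rw [hρv, Fin.val_last] at h3
    omega
  have hsplit : ∑ σ : Equiv.Perm (Fin (n + 1)),
        Equiv.Perm.sign σ • ∏ i : Fin (n + 1), S (σ i) i
      = ∑ σ ∈ ({ρ, τ} : Finset (Equiv.Perm (Fin (n + 1)))),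
        Equiv.Perm.sign σ • ∏ i : Fin (n + 1), S (σ i) i := by
    refine (Finset.sum_subset (Finset.subset_univ _) ?_).symm
    intro σ _ hσ
    simp only [Finset.mem_insert, Finset.mem_singleton] at hσ
    push_neg at hσ
    rw [hkey σ hσ.1 hσ.2, smul_zero]
  have hsρ : Equiv.Perm.sign ρ = (-1) ^ ((n + 1) / 2) := sign_revPerm_of_even (n + 1) hke
  have hsτ : Equiv.Perm.sign τ = -(-1) ^ ((n + 1) / 2) := by
    rw [hτdef, map_mul, hsρ, sign_finRotate]
    have hodd : Odd n := Nat.odd_iff.mpr (by omega)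
    rw [Nat.add_sub_cancel, hodd.neg_one_pow, mul_neg_one]
  rw [Matrix.det_apply, hsplit, Finset.sum_pair hρτ, hprod_ρ, hprod_τ, hsρ, hsτ]
  simp only [Units.smul_def, Units.val_pow_eq_pow_val, Units.val_neg, Units.val_one,
    zsmul_eq_mul]
  push_cast
  ring
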